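/- Define g(Ω) = 2 − e^{2/Ω}·E₁(2/Ω)/(e^{1/Ω}·E₁(1/Ω)) for Ω > 0. Then g(Ω) → 3/2 as Ω → 0⁺ and g(Ω) → 1 as Ω → ∞. (The throughput gain ratio τ_max/τ_conv,2 of buffer-aided relaying with adaptive link selection over conventional buffer-aided relaying for symmetric Rayleigh links ranges from 1 to 1.5.) -/

import Mathlib

open Real MeasureTheory Filter Set

/-- The exponential integral function `E₁(x) = ∫_x^∞ e^{-t}/t dt`. -/
noncomputable def expIntE1 (x : ℝ) : ℝ := ∫ t in Set.Ioi x, Real.exp (-t) / t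

lemma E1_integrableOn {x : ℝ} (hx : 0 < x) :
    IntegrableOn (fun t => Real.exp (-t) / t) (Set.Ioi x) := by
  have hg : IntegrableOn (fun t => Real.exp (-t) / x) (Set.Ioi x) := by
    have := (exp_neg_integrableOn_Ioi x (one_pos)).div_const x
    simp only [neg_one_mul] at this
    exact this
  refine hg.integrable.mono' ?_ ?_
  · refine (ContinuousOn.aestronglyMeasurable ?_ measurableSet_Ioi)
    exact ((Real.continuous_exp.comp continuous_neg).continuousOn).div
      continuousOn_id (fun t ht => (hx.trans ht).ne')
  · filter_upwards [ae_restrict_mem measurableSet_Ioi] with t ht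
    rw [Real.norm_eq_abs, abs_of_nonneg (div_nonneg (Real.exp_pos _).le (hx.trans ht).le)]
    exact div_le_div_of_nonneg_left (Real.exp_pos _).le hx ht.le

lemma E1_le {x : ℝ} (hx : 0 < x) : expIntE1 x ≤ Real.exp (-x) / x := by
  have h1 : expIntE1 x ≤ ∫ t in Set.Ioi x, Real.exp (-t) / x := by
    refine setIntegral_mono_on (E1_integrableOn hx) ?_ measurableSet_Ioi ?_
    · have := (exp_neg_integrableOn_Ioi x one_pos).div_const x; simp only [neg_one_mul] at this; exact this
    · intro t ht
      exact div_le_div_of_nonneg_left (Real.exp_pos _).le hx (le_of_lt ht)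
  calc expIntE1 x ≤ ∫ t in Set.Ioi x, Real.exp (-t) / x := h1
    _ = (∫ t in Set.Ioi x, Real.exp (-t)) / x := by rw [integral_div]
    _ = Real.exp (-x) / x := by rw [integral_exp_neg_Ioi]

lemma aux_deriv (t : ℝ) (ht : t > 0) :
    HasDerivAt (fun t => -Real.exp (-t) / (t + 1))
      (Real.exp (-t) * (t + 2) / (t + 1) ^ 2) t := by
  have h1 : HasDerivAt (fun t : ℝ => -Real.exp (-t)) (Real.exp (-t)) t := by
    simpa [Function.comp_def, Pi.neg_def] using ((Real.hasDerivAt_exp (-t)).comp t (hasDerivAt_neg t)).neg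
  have h2 : HasDerivAt (fun t : ℝ => t + 1) 1 t := by
    simpa using (hasDerivAt_id t).add_const 1
  have := h1.div h2 (by positivity)
  refine this.congr_deriv ?_
  ring

lemma aux_int {x : ℝ} (hx : 0 < x) :
    IntegrableOn (fun t => Real.exp (-t) * (t + 2) / (t + 1) ^ 2) (Set.Ioi x) := by
  refine (E1_integrableOn hx).integrable.mono' ?_ ?_
  · refine (ContinuousOn.aestronglyMeasurable ?_ measurableSet_Ioi)
    refine ContinuousOn.div (Continuous.continuousOn (by continuity))
      (Continuous.continuousOn (by continuity)) (fun t ht => by have : (0:ℝ) < t := hx.trans ht; positivity)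
  · filter_upwards [ae_restrict_mem measurableSet_Ioi] with t ht
    have ht0 : 0 < t := hx.trans ht
    rw [Real.norm_eq_abs, abs_of_nonneg (by positivity)]
    rw [div_le_div_iff₀ (by positivity) ht0]
    nlinarith [Real.exp_pos (-t), (Real.exp_pos (-t)).le]

lemma E1_ge {x : ℝ} (hx : 0 < x) : Real.exp (-x) / (x + 1) ≤ expIntE1 x := by
  have key : ∫ t in Set.Ioi x, Real.exp (-t) * (t + 2) / (t + 1) ^ 2
      = Real.exp (-x) / (x + 1) := by
    have := integral_Ioi_of_hasDerivAt_of_tendsto (a := x)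
      (f := fun t => -Real.exp (-t) / (t + 1))
      (f' := fun t => Real.exp (-t) * (t + 2) / (t + 1) ^ 2) (m := 0)
      ?_ (fun t ht => aux_deriv t (hx.trans ht)) (aux_int hx) ?_
    · rw [this]; ring
    · exact ((aux_deriv x hx).continuousAt).continuousWithinAt
    · have h1 : Tendsto (fun t : ℝ => Real.exp (-t)) atTop (nhds 0) :=
        Real.tendsto_exp_neg_atTop_nhds_zero
      have h2 : Tendsto (fun t : ℝ => t + 1) atTop atTop := tendsto_atTop_add_const_right _ 1 tendsto_id
      have := (h1.neg.div_atTop h2)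
      simpa using this
  rw [← key]
  refine setIntegral_mono_on (aux_int hx) (E1_integrableOn hx) measurableSet_Ioi ?_
  intro t ht
  have ht0 : 0 < t := hx.trans ht
  rw [div_le_div_iff₀ (by positivity) ht0]
  nlinarith [(Real.exp_pos (-t)).le]

lemma E1_pos {x : ℝ} (hx : 0 < x) : 0 < expIntE1 x :=
  lt_of_lt_of_le (by positivity) (E1_ge hx)

lemma E1_anti {x y : ℝ} (hx : 0 < x) (hxy : x ≤ y) : expIntE1 y ≤ expIntE1 x := by
  refine setIntegral_mono_set (E1_integrableOn hx) ?_ ?_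
  · filter_upwards [ae_restrict_mem measurableSet_Ioi] with t ht
    exact div_nonneg (Real.exp_pos _).le (hx.trans ht).le
  · exact HasSubset.Subset.eventuallyLE (Set.Ioi_subset_Ioi hxy)

lemma E1_sub_le {x : ℝ} (hx : 0 < x) : expIntE1 x - expIntE1 (2 * x) ≤ 1 := by
  have hle : x ≤ 2 * x := by linarith
  have hsub : Set.Ioc x (2 * x) ⊆ Set.Ioi x := Set.Ioc_subset_Ioi_self
  have hsplit : expIntE1 x
      = (∫ t in Set.Ioc x (2 * x), Real.exp (-t) / t) + expIntE1 (2 * x) := by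
    rw [expIntE1, ← Set.Ioc_union_Ioi_eq_Ioi hle]
    rw [setIntegral_union (Set.Ioc_disjoint_Ioi le_rfl) measurableSet_Ioi
      ((E1_integrableOn hx).mono_set hsub)
      ((E1_integrableOn hx).mono_set (Set.Ioi_subset_Ioi hle))]
    rfl
  have h1 : (∫ t in Set.Ioc x (2 * x), Real.exp (-t) / t)
      ≤ ∫ t in Set.Ioc x (2 * x), 1 / x := by
    refine setIntegral_mono_on ((E1_integrableOn hx).mono_set hsub)
      (integrableOn_const measure_Ioc_lt_top.ne) measurableSet_Ioc ?_
    intro t ht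
    have ht0 : 0 < t := hx.trans ht.1
    calc Real.exp (-t) / t ≤ 1 / t := by
          gcongr
          exact Real.exp_le_one_iff.2 (by linarith)
      _ ≤ 1 / x := by gcongr; exact ht.1.le
  have h2 : (∫ t in Set.Ioc x (2 * x), 1 / x) = 1 := by
    rw [setIntegral_const, Real.volume_real_Ioc, smul_eq_mul,
      max_eq_left (by linarith)]
    field_simp
    ring
  linarith

lemma E1_tendsto_atTop : Tendsto expIntE1 (nhdsWithin 0 (Set.Ioi 0)) atTop := by
  have hlog : Tendsto (fun x : ℝ => Real.exp (-1) * (-Real.log x))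
      (nhdsWithin 0 (Set.Ioi 0)) atTop := by
    refine Tendsto.const_mul_atTop (Real.exp_pos _) ?_
    exact tendsto_neg_atBot_atTop.comp Real.tendsto_log_nhdsGT_zero
  refine tendsto_atTop_mono' _ ?_ hlog
  filter_upwards [Ioo_mem_nhdsGT_of_mem (by norm_num : (0:ℝ) ∈ Set.Ico 0 1)] with x hx
  obtain ⟨hx0, hx1⟩ := hx
  have hsub : Set.Ioc x 1 ⊆ Set.Ioi x := Set.Ioc_subset_Ioi_self
  have h1 : (∫ t in Set.Ioc x 1, Real.exp (-t) / t) ≤ expIntE1 x := by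
    refine setIntegral_mono_set (E1_integrableOn hx0) ?_ (HasSubset.Subset.eventuallyLE hsub)
    filter_upwards [ae_restrict_mem measurableSet_Ioi] with t ht
    exact div_nonneg (Real.exp_pos _).le (hx0.trans ht).le
  have h2 : (∫ t in Set.Ioc x 1, Real.exp (-1) * (1 / t))
      ≤ ∫ t in Set.Ioc x 1, Real.exp (-t) / t := by
    refine setIntegral_mono_on ?_ ((E1_integrableOn hx0).mono_set hsub)
      measurableSet_Ioc ?_
    · refine (ContinuousOn.integrableOn_compact isCompact_Icc ?_).mono_set Set.Ioc_subset_Icc_self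
      refine ContinuousOn.mul continuousOn_const (ContinuousOn.div continuousOn_const
        continuousOn_id (fun t ht => ?_))
      exact ne_of_gt (lt_of_lt_of_le hx0 ht.1)
    · intro t ht
      rw [mul_one_div]
      exact div_le_div_of_nonneg_right (Real.exp_le_exp.2 (by linarith [ht.2]))
        (hx0.trans ht.1).le
  have h3 : (∫ t in Set.Ioc x 1, Real.exp (-1) * (1 / t))
      = Real.exp (-1) * (-Real.log x) := by
    rw [← intervalIntegral.integral_of_le hx1.le, intervalIntegral.integral_const_mul,
      integral_one_div (by
        intro h
        rw [Set.mem_uIcc] at h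
        rcases h with h | h <;> linarith), one_div, Real.log_inv]
  linarith

lemma ratio_atTop : Tendsto (fun x : ℝ => 2 - Real.exp (2 * x) * expIntE1 (2 * x)
    / (Real.exp x * expIntE1 x)) atTop (nhds (3 / 2)) := by
  have key : Tendsto (fun x : ℝ => Real.exp (2 * x) * expIntE1 (2 * x)
      / (Real.exp x * expIntE1 x)) atTop (nhds (1 / 2)) := by
    have hlo : Tendsto (fun x : ℝ => (2 + x⁻¹)⁻¹) atTop (nhds (1 / 2)) := by
      have : Tendsto (fun x : ℝ => 2 + x⁻¹) atTop (nhds 2) := by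
        simpa using (tendsto_const_nhds : Tendsto (fun _ : ℝ => (2:ℝ)) atTop (nhds 2)).add
          tendsto_inv_atTop_zero
      simpa [one_div] using this.inv₀ (by norm_num)
    have hhi : Tendsto (fun x : ℝ => (1 + x⁻¹) / 2) atTop (nhds (1 / 2)) := by
      have : Tendsto (fun x : ℝ => 1 + x⁻¹) atTop (nhds 1) := by
        simpa using (tendsto_const_nhds : Tendsto (fun _ : ℝ => (1:ℝ)) atTop (nhds 1)).add
          tendsto_inv_atTop_zero
      simpa [one_div] using this.div_const 2
    refine tendsto_of_tendsto_of_tendsto_of_le_of_le' hlo hhi ?_ ?_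
    · filter_upwards [eventually_gt_atTop (0:ℝ)] with x hx
      have h2x : (0:ℝ) < 2 * x := by linarith
      have hnum : 1 / (2 * x + 1) ≤ Real.exp (2 * x) * expIntE1 (2 * x) := by
        have := mul_le_mul_of_nonneg_left (E1_ge h2x) (Real.exp_pos (2 * x)).le
        calc (1:ℝ) / (2 * x + 1)
            = Real.exp (2 * x) * (Real.exp (-(2 * x)) / (2 * x + 1)) := by
              rw [Real.exp_neg]; field_simp
          _ ≤ _ := this
      have hden : Real.exp x * expIntE1 x ≤ 1 / x := by
        have := mul_le_mul_of_nonneg_left (E1_le hx) (Real.exp_pos x).le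
        calc Real.exp x * expIntE1 x ≤ Real.exp x * (Real.exp (-x) / x) := this
          _ = 1 / x := by rw [Real.exp_neg]; field_simp
      have hdenpos : 0 < Real.exp x * expIntE1 x :=
        mul_pos (Real.exp_pos x) (E1_pos hx)
      have : 1 / (2 * x + 1) / (1 / x)
          ≤ Real.exp (2 * x) * expIntE1 (2 * x) / (Real.exp x * expIntE1 x) :=
        div_le_div₀ (mul_pos (Real.exp_pos _) (E1_pos h2x)).le hnum hdenpos hden
      calc (2 + x⁻¹)⁻¹ = 1 / (2 * x + 1) / (1 / x) := by
            rw [eq_div_iff (by positivity)]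
            field_simp
        _ ≤ _ := this
    · filter_upwards [eventually_gt_atTop (0:ℝ)] with x hx
      have h2x : (0:ℝ) < 2 * x := by linarith
      have hnum : Real.exp (2 * x) * expIntE1 (2 * x) ≤ 1 / (2 * x) := by
        have := mul_le_mul_of_nonneg_left (E1_le h2x) (Real.exp_pos (2 * x)).le
        calc Real.exp (2 * x) * expIntE1 (2 * x)
            ≤ Real.exp (2 * x) * (Real.exp (-(2 * x)) / (2 * x)) := this
          _ = 1 / (2 * x) := by rw [Real.exp_neg]; field_simp
      have hden : 1 / (x + 1) ≤ Real.exp x * expIntE1 x := by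
        have := mul_le_mul_of_nonneg_left (E1_ge hx) (Real.exp_pos x).le
        calc (1:ℝ) / (x + 1) = Real.exp x * (Real.exp (-x) / (x + 1)) := by
              rw [Real.exp_neg]; field_simp
          _ ≤ _ := this
      have : Real.exp (2 * x) * expIntE1 (2 * x) / (Real.exp x * expIntE1 x)
          ≤ 1 / (2 * x) / (1 / (x + 1)) :=
        div_le_div₀ (by positivity) hnum (by positivity) hden
      calc Real.exp (2 * x) * expIntE1 (2 * x) / (Real.exp x * expIntE1 x)
          ≤ 1 / (2 * x) / (1 / (x + 1)) := this
        _ = (1 + x⁻¹) / 2 := by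
            rw [div_eq_div_iff (by positivity) (by norm_num)]
            field_simp
  have h32 : (3:ℝ)/2 = 2 - 1/2 := by norm_num
  rw [h32]
  exact tendsto_const_nhds.sub key

lemma ratio_zero : Tendsto (fun x : ℝ => 2 - Real.exp (2 * x) * expIntE1 (2 * x)
    / (Real.exp x * expIntE1 x)) (nhdsWithin 0 (Set.Ioi 0)) (nhds 1) := by
  have key : Tendsto (fun x : ℝ => Real.exp (2 * x) * expIntE1 (2 * x)
      / (Real.exp x * expIntE1 x)) (nhdsWithin 0 (Set.Ioi 0)) (nhds 1) := by
    have hexp : Tendsto (fun x : ℝ => Real.exp x) (nhdsWithin 0 (Set.Ioi 0)) (nhds 1) := by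
      have := Real.continuous_exp.continuousAt (x := (0:ℝ))
      simpa [Real.exp_zero] using this.continuousWithinAt.tendsto
    have hinv : Tendsto (fun x : ℝ => 1 - (expIntE1 x)⁻¹)
        (nhdsWithin 0 (Set.Ioi 0)) (nhds 1) := by
      have h0 : Tendsto (fun x : ℝ => (expIntE1 x)⁻¹) (nhdsWithin 0 (Set.Ioi 0)) (nhds 0) :=
        E1_tendsto_atTop.inv_tendsto_atTop
      simpa using tendsto_const_nhds.sub h0
    have hlo : Tendsto (fun x : ℝ => Real.exp x * (1 - (expIntE1 x)⁻¹))
        (nhdsWithin 0 (Set.Ioi 0)) (nhds 1) := by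
      simpa using hexp.mul hinv
    refine tendsto_of_tendsto_of_tendsto_of_le_of_le' hlo hexp ?_ ?_
    · filter_upwards [self_mem_nhdsWithin] with x hx
      have hx0 : (0:ℝ) < x := hx
      have h2x : (0:ℝ) < 2 * x := by linarith
      have hE : 0 < expIntE1 x := E1_pos hx0
      have hsub : expIntE1 x - 1 ≤ expIntE1 (2 * x) := by
        linarith [E1_sub_le hx0]
      have heq : Real.exp (2 * x) * expIntE1 (2 * x) / (Real.exp x * expIntE1 x)
          = Real.exp x * (expIntE1 (2 * x) / expIntE1 x) := by
        rw [two_mul, Real.exp_add]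
        field_simp
      rw [heq]
      have : 1 - (expIntE1 x)⁻¹ ≤ expIntE1 (2 * x) / expIntE1 x := by
        rw [le_div_iff₀ hE]
        have : (1 - (expIntE1 x)⁻¹) * expIntE1 x = expIntE1 x - 1 := by
          field_simp
        rw [this]
        exact hsub
      exact mul_le_mul_of_nonneg_left this (Real.exp_pos x).le
    · filter_upwards [self_mem_nhdsWithin] with x hx
      have hx0 : (0:ℝ) < x := hx
      have h2x : (0:ℝ) < 2 * x := by linarith
      have hE : 0 < expIntE1 x := E1_pos hx0
      have heq : Real.exp (2 * x) * expIntE1 (2 * x) / (Real.exp x * expIntE1 x)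
          = Real.exp x * (expIntE1 (2 * x) / expIntE1 x) := by
        rw [two_mul, Real.exp_add]
        field_simp
      rw [heq]
      have : expIntE1 (2 * x) / expIntE1 x ≤ 1 := by
        rw [div_le_one hE]
        exact E1_anti hx0 (by linarith)
      calc Real.exp x * (expIntE1 (2 * x) / expIntE1 x) ≤ Real.exp x * 1 :=
            mul_le_mul_of_nonneg_left this (Real.exp_pos x).le
        _ = Real.exp x := mul_one _
  have h1 : (1:ℝ) = 2 - 1 := by norm_num
  rw [h1]
  exact tendsto_const_nhds.sub key

/-- The throughput gain ratio
`g(Ω) = 2 − e^{2/Ω}E₁(2/Ω)/(e^{1/Ω}E₁(1/Ω))` of buffer-aided relaying with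
adaptive link selection over conventional buffer-aided relaying for symmetric
Rayleigh links satisfies `g(Ω) → 3/2` as `Ω → 0⁺` and `g(Ω) → 1` as `Ω → ∞`. -/
theorem gain_ratio_limits :
    Tendsto
      (fun Ω : ℝ => 2 - Real.exp (2 / Ω) * expIntE1 (2 / Ω)
          / (Real.exp (1 / Ω) * expIntE1 (1 / Ω)))
      (nhdsWithin 0 (Set.Ioi 0)) (nhds (3 / 2)) ∧
    Tendsto
      (fun Ω : ℝ => 2 - Real.exp (2 / Ω) * expIntE1 (2 / Ω)
          / (Real.exp (1 / Ω) * expIntE1 (1 / Ω)))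
      atTop (nhds 1) := by
  have hfun : (fun Ω : ℝ => 2 - Real.exp (2 / Ω) * expIntE1 (2 / Ω)
      / (Real.exp (1 / Ω) * expIntE1 (1 / Ω)))
      = (fun x : ℝ => 2 - Real.exp (2 * x) * expIntE1 (2 * x)
      / (Real.exp x * expIntE1 x)) ∘ (fun Ω : ℝ => Ω⁻¹) := by
    funext Ω
    simp [Function.comp, mul_inv_eq_iff_eq_mul, div_eq_mul_inv, one_mul]
  rw [hfun]
  exact ⟨ratio_atTop.comp tendsto_inv_nhdsGT_zero,
    ratio_zero.comp tendsto_inv_atTop_nhdsGT_zero⟩
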